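/- Let T, Ω, Q be linear subspaces of ℝ^{n×n}, let Γ = Q ∩ T^⊥, and suppose ‖P_Ω P_{Γ^⊥}‖ ≤ 1/2. Then for any H_L, H_S ∈ ℝ^{n×n} with P_Q H_L = P_Q H_S, one has ‖P_Ω H_S‖_F ≤ 2‖P_{T^⊥} H_L‖_F + ‖P_{Ω^⊥} H_S‖_F. -/

import Mathlib

open scoped BigOperators Matrix

abbrev Mat (n : ℕ) := Matrix (Fin n) (Fin n) ℝ

/-- Trace (Frobenius) inner product `⟨X, Y⟩ = trace (Xᵀ Y)`. -/
def finner {n : ℕ} (X Y : Mat n) : ℝ := ∑ i, ∑ j, X i j * Y i j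

/-- Frobenius norm. -/
noncomputable def fnorm {n : ℕ} (X : Mat n) : ℝ := Real.sqrt (finner X X)

/-- Entrywise ℓ¹ norm. -/
def l1Norm {n : ℕ} (X : Mat n) : ℝ := ∑ i, ∑ j, |X i j|

/-- Entrywise ℓ∞ norm. -/
noncomputable def linfNorm {n : ℕ} (X : Mat n) : ℝ := ⨆ p : Fin n × Fin n, |X p.1 p.2|

/-- Spectral (ℓ² operator) norm. -/
noncomputable def specNorm {n : ℕ} (X : Mat n) : ℝ := ‖Matrix.toEuclideanCLM (𝕜 := ℝ) X‖

/-- Nuclear norm: the sum of the singular values, i.e. of the square roots of the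
eigenvalues of `Xᵀ * X`. -/
noncomputable def nucNorm {n : ℕ} (X : Mat n) : ℝ :=
  ∑ i, Real.sqrt ((show (Xᵀ * X).IsHermitian by
    simpa [Matrix.conjTranspose_eq_transpose_of_trivial] using
      Matrix.isHermitian_conjTranspose_mul_self X).eigenvalues i)

/-- Operator norm of a linear map on matrix space, w.r.t. the Frobenius norm:
`sup {‖A X‖_F : ‖X‖_F = 1}`. -/
noncomputable def opNorm {n : ℕ} (A : Mat n →ₗ[ℝ] Mat n) : ℝ :=
  sSup {c : ℝ | ∃ X : Mat n, fnorm X = 1 ∧ c = fnorm (A X)}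

/-- `P` is the orthogonal projection onto the subspace `V` (w.r.t. the trace inner product). -/
def IsOrthProj {n : ℕ} (V : Submodule ℝ (Mat n)) (P : Mat n →ₗ[ℝ] Mat n) : Prop :=
  (∀ X, P X ∈ V) ∧ (∀ X ∈ V, P X = X) ∧ (∀ X, ∀ Y ∈ V, finner (X - P X) Y = 0)

/-- Orthogonal complement of a subspace of matrix space w.r.t. the trace inner product. -/
def orthComp {n : ℕ} (V : Submodule ℝ (Mat n)) : Submodule ℝ (Mat n) where
  carrier := {X | ∀ Y ∈ V, finner X Y = 0}
  zero_mem' := by intro Y hY; simp [finner]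
  add_mem' := by
    intro a b ha hb Y hY
    have h1 := ha Y hY
    have h2 := hb Y hY
    simp only [finner, Matrix.add_apply, add_mul, Finset.sum_add_distrib] at *
    rw [h1, h2]; ring
  smul_mem' := by
    intro c a ha Y hY
    have h1 := ha Y hY
    simp only [finner, Matrix.smul_apply, smul_eq_mul, mul_assoc, ← Finset.mul_sum] at *
    rw [h1]; ring

/-- The tangent space `T = {U Xᵀ + Y Vᵀ}` associated with the reduced SVD `L₀ = U Σ Vᵀ`. -/
def tangentT {n r : ℕ} (U V : Matrix (Fin n) (Fin r) ℝ) : Submodule ℝ (Mat n) where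
  carrier := {A | ∃ X Y : Matrix (Fin n) (Fin r) ℝ, A = U * Xᵀ + Y * Vᵀ}
  zero_mem' := ⟨0, 0, by simp⟩
  add_mem' := by
    rintro a b ⟨X1, Y1, rfl⟩ ⟨X2, Y2, rfl⟩
    exact ⟨X1 + X2, Y1 + Y2, by rw [Matrix.transpose_add, Matrix.mul_add, Matrix.add_mul]; abel⟩
  smul_mem' := by
    rintro c a ⟨X1, Y1, rfl⟩
    exact ⟨c • X1, c • Y1,
      by rw [Matrix.transpose_smul, Matrix.mul_smul, Matrix.smul_mul, smul_add]⟩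

/-- The support subspace `Ω` of `S₀`: matrices vanishing wherever `S₀` vanishes. -/
def suppSub {n : ℕ} (S0 : Mat n) : Submodule ℝ (Mat n) where
  carrier := {X | ∀ i j, S0 i j = 0 → X i j = 0}
  zero_mem' := by intro i j _; rfl
  add_mem' := by
    intro a b ha hb i j h
    simp [Matrix.add_apply, ha i j h, hb i j h]
  smul_mem' := by
    intro c a ha i j h
    simp [Matrix.smul_apply, ha i j h]

/-- Entrywise sign matrix. -/
noncomputable def sgnMat {n : ℕ} (S : Mat n) : Mat n := Matrix.of fun i j => Real.sign (S i j)

section Helpers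

def toE {n : ℕ} (X : Mat n) : EuclideanSpace ℝ (Fin n × Fin n) :=
  WithLp.toLp 2 (fun p : Fin n × Fin n => X p.1 p.2)

lemma toE_sub {n : ℕ} (X Y : Mat n) : toE (X - Y) = toE X - toE Y := rfl

lemma finner_toE {n : ℕ} (X Y : Mat n) : finner X Y = inner ℝ (toE X) (toE Y) := by
  simp [finner, toE, PiLp.inner_apply, RCLike.inner_apply, Fintype.sum_prod_type, mul_comm]

lemma fnorm_toE {n : ℕ} (X : Mat n) : fnorm X = ‖toE X‖ := by
  rw [fnorm, finner_toE, norm_eq_sqrt_real_inner]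

lemma fnorm_nonneg' {n : ℕ} (X : Mat n) : 0 ≤ fnorm X := Real.sqrt_nonneg _

lemma fnorm_add_le {n : ℕ} (X Y : Mat n) : fnorm (X + Y) ≤ fnorm X + fnorm Y := by
  simp only [fnorm_toE]
  rw [show toE (X + Y) = toE X + toE Y from rfl]
  exact norm_add_le _ _

lemma fnorm_smul {n : ℕ} (c : ℝ) (X : Mat n) : fnorm (c • X) = |c| * fnorm X := by
  simp only [fnorm_toE]
  rw [show toE (c • X) = c • toE X from rfl, norm_smul, Real.norm_eq_abs]

lemma finner_le {n : ℕ} (X Y : Mat n) : finner X Y ≤ fnorm X * fnorm Y := by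
  rw [finner_toE, fnorm_toE, fnorm_toE]; exact real_inner_le_norm _ _

lemma finner_self_eq {n : ℕ} (X : Mat n) : finner X X = fnorm X ^ 2 := by
  rw [finner_toE, fnorm_toE]; exact real_inner_self_eq_norm_sq _

lemma finner_comm {n : ℕ} (X Y : Mat n) : finner X Y = finner Y X := by
  simp [finner, mul_comm]

lemma finner_sub_left {n : ℕ} (X Y Z : Mat n) :
    finner (X - Y) Z = finner X Z - finner Y Z := by
  rw [finner_toE, finner_toE, finner_toE, toE_sub, inner_sub_left]

lemma eq_zero_of_finner_self {n : ℕ} (X : Mat n) (h : finner X X = 0) : X = 0 := by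
  rw [finner_toE, inner_self_eq_zero] at h
  ext i j
  have := congrArg (fun v => v (i, j)) h
  simpa [toE] using this

lemma aux_le (a b : ℝ) (hb : 0 ≤ b) (h : a ^ 2 ≤ b * a) : a ≤ b := by
  nlinarith

/-- An orthogonal projection is norm-nonincreasing. -/
lemma orthProj_fnorm_le {n : ℕ} {V : Submodule ℝ (Mat n)} {P : Mat n →ₗ[ℝ] Mat n}
    (hP : IsOrthProj V P) (X : Mat n) : fnorm (P X) ≤ fnorm X := by
  have h0 : finner (X - P X) (P X) = 0 := hP.2.2 X (P X) (hP.1 X)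
  rw [finner_sub_left] at h0
  apply aux_le _ _ (fnorm_nonneg' X)
  rw [← finner_self_eq]
  calc finner (P X) (P X) = finner X (P X) := by linarith
    _ ≤ fnorm X * fnorm (P X) := finner_le _ _

/-- Operator-norm bound from `opNorm A ≤ c`. -/
lemma opNorm_bound {n : ℕ} {V W : Submodule ℝ (Mat n)} {P1 P2 : Mat n →ₗ[ℝ] Mat n}
    (h1 : IsOrthProj V P1) (h2 : IsOrthProj W P2) {c : ℝ}
    (hop : opNorm (P1 ∘ₗ P2) ≤ c) (X : Mat n) :
    fnorm (P1 (P2 X)) ≤ c * fnorm X := by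
  by_cases hX : X = 0
  · simp [hX, fnorm, finner]
  · have hpos : 0 < fnorm X := by
      rcases lt_or_eq_of_le (fnorm_nonneg' X) with h | h
      · exact h
      · exfalso; apply hX
        apply eq_zero_of_finner_self
        rw [finner_self_eq, ← h]; ring
    set t : ℝ := (fnorm X)⁻¹ with ht
    have htpos : 0 < t := inv_pos.mpr hpos
    have hX' : fnorm (t • X) = 1 := by
      rw [fnorm_smul, abs_of_pos htpos, ht, inv_mul_cancel₀ (ne_of_gt hpos)]
    have hmem : fnorm ((P1 ∘ₗ P2) (t • X)) ∈
        {c : ℝ | ∃ Y : Mat n, fnorm Y = 1 ∧ c = fnorm ((P1 ∘ₗ P2) Y)} :=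
      ⟨t • X, hX', rfl⟩
    have hbdd : BddAbove {c : ℝ | ∃ Y : Mat n, fnorm Y = 1 ∧ c = fnorm ((P1 ∘ₗ P2) Y)} := by
      refine ⟨1, ?_⟩
      rintro a ⟨Y, hY, rfl⟩
      calc fnorm ((P1 ∘ₗ P2) Y) = fnorm (P1 (P2 Y)) := rfl
        _ ≤ fnorm (P2 Y) := orthProj_fnorm_le h1 _
        _ ≤ fnorm Y := orthProj_fnorm_le h2 _
        _ = 1 := hY
    have hle : fnorm ((P1 ∘ₗ P2) (t • X)) ≤ c := le_trans (le_csSup hbdd hmem) hop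
    have heq : fnorm ((P1 ∘ₗ P2) (t • X)) = t * fnorm (P1 (P2 X)) := by
      rw [map_smul, fnorm_smul, abs_of_pos htpos]; rfl
    rw [heq] at hle
    calc fnorm (P1 (P2 X)) = fnorm X * (t * fnorm (P1 (P2 X))) := by
          rw [ht]; field_simp
      _ ≤ fnorm X * c := by
          exact mul_le_mul_of_nonneg_left hle (le_of_lt hpos)
      _ = c * fnorm X := mul_comm _ _

end Helpers

/-- With `Γ = Q ∩ T^⊥` and `‖P_Ω P_{Γ^⊥}‖ ≤ 1/2`, any `H_L, H_S` with
`P_Q H_L = P_Q H_S` satisfy `‖P_Ω H_S‖_F ≤ 2‖P_{T^⊥} H_L‖_F + ‖P_{Ω^⊥} H_S‖_F`. -/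
theorem statement7 {n : ℕ} (T Ω Q : Submodule ℝ (Mat n))
    (PQ PΩ PΩperp PTperp PΓperp : Mat n →ₗ[ℝ] Mat n)
    (hPQ : IsOrthProj Q PQ)
    (hPΩ : IsOrthProj Ω PΩ)
    (hPΩperp : IsOrthProj (orthComp Ω) PΩperp)
    (hPTperp : IsOrthProj (orthComp T) PTperp)
    (hPΓperp : IsOrthProj (orthComp (Q ⊓ orthComp T)) PΓperp)
    (hop : opNorm (PΩ ∘ₗ PΓperp) ≤ 1 / 2) :
    ∀ HL HS : Mat n, PQ HL = PQ HS →
      fnorm (PΩ HS) ≤ 2 * fnorm (PTperp HL) + fnorm (PΩperp HS) := by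
  intro HL HS hQeq
  set Γ : Submodule ℝ (Mat n) := Q ⊓ orthComp T with hΓ
  -- Step A : `PΓperp (HS - HL) = HS - HL`
  have hQH : PQ (HS - HL) = 0 := by rw [map_sub, hQeq, sub_self]
  have hHorthQ : (HS - HL) ∈ orthComp Q := by
    intro Y hY
    have := hPQ.2.2 (HS - HL) Y hY
    rwa [hQH, sub_zero] at this
  have hHorthΓ : (HS - HL) ∈ orthComp Γ := by
    intro Y hY
    exact hHorthQ Y (Submodule.mem_inf.mp hY).1
  have hHfix : PΓperp (HS - HL) = HS - HL := hPΓperp.2.1 _ hHorthΓ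
  -- Step B : `G := HS - PΓperp HS` equals `HL - PΓperp HL`
  set G : Mat n := HS - PΓperp HS with hGdef
  have hGL : G = HL - PΓperp HL := by
    have h1 : G - (HL - PΓperp HL) = (HS - HL) - PΓperp (HS - HL) := by
      rw [map_sub, hGdef]; abel
    rw [hHfix, sub_self] at h1
    exact sub_eq_zero.mp h1
  -- Step C : `G` is orthogonal to `orthComp Γ`
  have hGperp : ∀ Y ∈ orthComp Γ, finner G Y = 0 := fun Y hY => hPΓperp.2.2 HS Y hY
  -- Step D : `fnorm G ≤ fnorm (PTperp HL)`
  have hZmem : HL - PTperp HL ∈ orthComp Γ := by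
    intro Y hY
    exact hPTperp.2.2 HL Y (Submodule.mem_inf.mp hY).2
  have hG1 : finner G (PΓperp HL) = 0 := by
    rw [finner_comm]
    have := hGperp (PΓperp HL) (hPΓperp.1 HL)
    rwa [finner_comm] at this
  have hG2 : finner G (HL - PTperp HL) = 0 := by
    rw [finner_comm]
    have := hGperp (HL - PTperp HL) hZmem
    rwa [finner_comm] at this
  have hGHL : finner G G = finner G HL := by
    nth_rewrite 2 [hGL]
    rw [finner_comm, finner_sub_left, finner_comm (PΓperp HL) G, hG1, finner_comm HL G]
    ring
  have hGPT : finner G HL = finner G (PTperp HL) := by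
    rw [finner_comm, finner_sub_left, finner_comm HL G, finner_comm (PTperp HL) G] at hG2
    linarith
  have hGnorm : fnorm G ≤ fnorm (PTperp HL) := by
    apply aux_le _ _ (fnorm_nonneg' _)
    rw [← finner_self_eq]
    calc finner G G = finner G (PTperp HL) := by rw [hGHL, hGPT]
      _ ≤ fnorm G * fnorm (PTperp HL) := finner_le _ _
      _ = fnorm (PTperp HL) * fnorm G := mul_comm _ _
  -- Step E : `PΩperp HS = HS - PΩ HS`
  have hW : PΩperp (PΩ HS) = 0 := by
    set Z : Mat n := PΩperp (PΩ HS) with hZ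
    have h1 : finner (PΩ HS - Z) Z = 0 := hPΩperp.2.2 (PΩ HS) Z (hPΩperp.1 (PΩ HS))
    have h2 : finner Z (PΩ HS) = 0 := hPΩperp.1 (PΩ HS) (PΩ HS) (hPΩ.1 HS)
    rw [finner_sub_left] at h1
    apply eq_zero_of_finner_self
    rw [finner_comm] at h2
    linarith
  have hDmem : HS - PΩ HS ∈ orthComp Ω := fun Y hY => hPΩ.2.2 HS Y hY
  have hE : PΩperp HS = HS - PΩ HS := by
    have h1 : PΩperp HS = PΩperp (PΩ HS) + PΩperp (HS - PΩ HS) := by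
      rw [← map_add]; congr 1; abel
    rw [h1, hW, hPΩperp.2.1 _ hDmem, zero_add]
  -- Step F : triangle inequality for the decomposition of `PΩ HS`
  have hF : fnorm (PΩ HS) ≤ fnorm (PΩ G) + fnorm (PΩ (PΓperp HS)) := by
    have h1 : PΩ HS = PΩ G + PΩ (PΓperp HS) := by
      rw [← map_add]; congr 1; rw [hGdef]; abel
    rw [h1]; exact fnorm_add_le _ _
  -- Step G : bound `fnorm (PΩ (PΓperp HS))` via the operator norm hypothesis
  have hsplit : PΓperp HS = PΓperp (PΩ HS) + PΓperp (PΩperp HS) := by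
    rw [← map_add]; congr 1; rw [hE]; abel
  have hG3 : fnorm (PΩ (PΓperp HS)) ≤
      1 / 2 * fnorm (PΩ HS) + 1 / 2 * fnorm (PΩperp HS) := by
    have h1 : PΩ (PΓperp HS) = PΩ (PΓperp (PΩ HS)) + PΩ (PΓperp (PΩperp HS)) := by
      rw [hsplit, map_add]
    calc fnorm (PΩ (PΓperp HS))
        ≤ fnorm (PΩ (PΓperp (PΩ HS))) + fnorm (PΩ (PΓperp (PΩperp HS))) := by
          rw [h1]; exact fnorm_add_le _ _
      _ ≤ 1 / 2 * fnorm (PΩ HS) + 1 / 2 * fnorm (PΩperp HS) :=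
          add_le_add (opNorm_bound hPΩ hPΓperp hop _) (opNorm_bound hPΩ hPΓperp hop _)
  -- Combine everything
  have hPΩG : fnorm (PΩ G) ≤ fnorm (PTperp HL) :=
    le_trans (orthProj_fnorm_le hPΩ G) hGnorm
  linarith
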